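/- Let (Ω, P) be a probability space, N ≥ 2 an integer, μ ∈ ℝ, α > 0, β > 0, and δ > 0. Let x_1, …, x_N : Ω → ℝ and x_1^{(m)}, …, x_N^{(m)} : Ω → ℝ be measurable functions such that |x_i(ω) − x_i^{(m)}(ω)| ≤ δ for all i and all ω ∈ Ω. Define x̄ = (1/N)·Σ_{i=1}^N x_i, x̄^{(m)} = (1/N)·Σ_{i=1}^N x_i^{(m)}, s = sqrt((1/(N−1))·Σ_{i=1}^N (x_i − x̄)²), s^{(m)} = sqrt((1/(N−1))·Σ_{i=1}^N (x_i^{(m)} − x̄^{(m)})²), and p_α = P(|x̄ − μ| ≤ α·s/√N). If δ ≤ β·α·s^{(m)}(ω)/√N for all ω ∈ Ω, then P( |x̄^{(m)} − μ| ≤ (α·s^{(m)}/√N)·( 1 + β + β·α/√(N−1) ) ) ≥ p_α. -/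

import Mathlib

open MeasureTheory Finset

set_option maxHeartbeats 1600000 in
theorem stmt3 {Ω : Type*} [MeasurableSpace Ω] (P : Measure Ω) [IsProbabilityMeasure P]
    (N : ℕ) (hN : 2 ≤ N) (μ α β δ : ℝ) (hα : 0 < α) (hβ : 0 < β) (hδ : 0 < δ)
    (x xm : Fin N → Ω → ℝ)
    (hx : ∀ i, Measurable (x i)) (hxm : ∀ i, Measurable (xm i))
    (hbias : ∀ i ω, |x i ω - xm i ω| ≤ δ)
    (hδβ : ∀ ω, δ ≤ β * α *
        Real.sqrt ((∑ i, (xm i ω - (∑ j, xm j ω) / N) ^ 2) / (N - 1)) / Real.sqrt N) :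
    P {ω | |(∑ i, x i ω) / N - μ|
          ≤ α * Real.sqrt ((∑ i, (x i ω - (∑ j, x j ω) / N) ^ 2) / (N - 1)) / Real.sqrt N}
      ≤ P {ω | |(∑ i, xm i ω) / N - μ|
          ≤ α * Real.sqrt ((∑ i, (xm i ω - (∑ j, xm j ω) / N) ^ 2) / (N - 1)) / Real.sqrt N *
              (1 + β + β * α / Real.sqrt (N - 1))} := by
  apply measure_mono
  intro ω hω
  simp only [Set.mem_setOf_eq] at hω ⊢
  have hN2 : (2:ℝ) ≤ (N:ℝ) := by exact_mod_cast hN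
  have hN1pos : (0:ℝ) < (N:ℝ) - 1 := by linarith
  have hNpos : (0:ℝ) < (N:ℝ) := by linarith
  set sN := Real.sqrt (N:ℝ) with hsNdef
  set s1 := Real.sqrt ((N:ℝ) - 1) with hs1def
  have hsN : 0 < sN := Real.sqrt_pos.mpr hNpos
  have hs1 : 0 < s1 := Real.sqrt_pos.mpr hN1pos
  set ab := (∑ j, x j ω) / (N:ℝ) with hab
  set bb := (∑ j, xm j ω) / (N:ℝ) with hbb
  set S := Real.sqrt (∑ i, (x i ω - ab) ^ 2) with hSdef
  set Sm := Real.sqrt (∑ i, (xm i ω - bb) ^ 2) with hSmdef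
  have hq1 : Real.sqrt ((∑ i, (x i ω - ab) ^ 2) / ((N:ℝ) - 1)) = S / s1 := by
    rw [Real.sqrt_div (by positivity)]
  have hq2 : Real.sqrt ((∑ i, (xm i ω - bb) ^ 2) / ((N:ℝ) - 1)) = Sm / s1 := by
    rw [Real.sqrt_div (by positivity)]
  rw [hq1] at hω
  rw [hq2]
  have hδ' : δ ≤ β * α * (Sm / s1) / sN := by
    have := hδβ ω
    rwa [hq2] at this
  -- mean difference
  have hsumd : ∑ i, (x i ω - xm i ω) = (N:ℝ) * (ab - bb) := by
    rw [Finset.sum_sub_distrib, hab, hbb]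
    field_simp
  have hmean : |ab - bb| ≤ δ := by
    have h1 : ab - bb = (∑ i, (x i ω - xm i ω)) / N := by
      rw [hsumd]; field_simp
    rw [h1, abs_div, abs_of_pos hNpos, div_le_iff₀ hNpos]
    calc |∑ i, (x i ω - xm i ω)| ≤ ∑ i, |x i ω - xm i ω| :=
          Finset.abs_sum_le_sum_abs _ _
      _ ≤ ∑ _i : Fin N, δ := Finset.sum_le_sum fun i _ => hbias i ω
      _ = (N:ℝ) * δ := by simp [mul_comm]
      _ = δ * (N:ℝ) := mul_comm _ _
  -- Minkowski: S ≤ Sm + δ * sN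
  have hd2 : ∑ i, (x i ω - xm i ω) ^ 2 ≤ (N:ℝ) * δ ^ 2 := by
    calc ∑ i, (x i ω - xm i ω) ^ 2 ≤ ∑ _i : Fin N, δ ^ 2 := by
          refine Finset.sum_le_sum fun i _ => ?_
          have h := hbias i ω
          have := abs_le.mp h
          nlinarith [this.1, this.2]
      _ = (N:ℝ) * δ ^ 2 := by simp [mul_comm]
  have hexp : ∑ i, ((x i ω - xm i ω) - (ab - bb)) ^ 2
      = (∑ i, (x i ω - xm i ω) ^ 2) - (N:ℝ) * (ab - bb) ^ 2 := by
    have h : ∀ i : Fin N, ((x i ω - xm i ω) - (ab - bb)) ^ 2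
        = (x i ω - xm i ω) ^ 2 - 2 * (ab - bb) * (x i ω - xm i ω) + (ab - bb) ^ 2 :=
      fun i => by ring
    rw [Finset.sum_congr rfl fun i _ => h i, Finset.sum_add_distrib,
      Finset.sum_sub_distrib, ← Finset.mul_sum, hsumd]
    simp only [Finset.sum_const, Finset.card_fin, nsmul_eq_mul]
    ring
  have hMink : S ≤ Sm + δ * sN := by
    set u : EuclideanSpace ℝ (Fin N) := WithLp.toLp 2 (fun i => xm i ω - bb) with hu
    set v : EuclideanSpace ℝ (Fin N) := WithLp.toLp 2 (fun i => (x i ω - xm i ω) - (ab - bb)) with hv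
    have hnu : ‖u‖ = Sm := by
      rw [EuclideanSpace.norm_eq, hSmdef]
      congr 1
      refine Finset.sum_congr rfl fun i _ => ?_
      rw [Real.norm_eq_abs, sq_abs]
    have hnv : ‖v‖ ≤ δ * sN := by
      rw [EuclideanSpace.norm_eq]
      have hle : ∑ i, ‖v i‖ ^ 2 ≤ (N:ℝ) * δ ^ 2 := by
        have heq : ∑ i, ‖v i‖ ^ 2 = ∑ i, ((x i ω - xm i ω) - (ab - bb)) ^ 2 := by
          refine Finset.sum_congr rfl fun i _ => ?_
          rw [Real.norm_eq_abs, sq_abs]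
        rw [heq, hexp]
        nlinarith [sq_nonneg (ab - bb)]
      calc Real.sqrt (∑ i, ‖v i‖ ^ 2) ≤ Real.sqrt ((N:ℝ) * δ ^ 2) :=
            Real.sqrt_le_sqrt hle
        _ = sN * δ := by
            rw [Real.sqrt_mul hNpos.le, Real.sqrt_sq hδ.le]
        _ = δ * sN := mul_comm _ _
    have huv : S = ‖u + v‖ := by
      rw [EuclideanSpace.norm_eq, hSdef]
      congr 1
      refine Finset.sum_congr rfl fun i _ => ?_
      rw [Real.norm_eq_abs, sq_abs]
      have : (u + v) i = u i + v i := rfl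
      rw [this, hu, hv]
      ring_nf
    calc S = ‖u + v‖ := huv
      _ ≤ ‖u‖ + ‖v‖ := norm_add_le _ _
      _ ≤ Sm + δ * sN := by rw [hnu]; linarith
  -- reformulate divisions
  have hSmnn : 0 ≤ Sm := Real.sqrt_nonneg _
  set c := 1 / (s1 * sN) with hc
  set e := 1 / s1 with he
  have hcpos : 0 < c := by positivity
  have hepos : 0 < e := by positivity
  have hωc : |ab - μ| ≤ α * S * c := by
    have : α * (S / s1) / sN = α * S * c := by rw [hc]; field_simp
    linarith [hω, this.symm.le, this.le]
  have hδc : δ ≤ β * α * Sm * c := by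
    have : β * α * (Sm / s1) / sN = β * α * Sm * c := by rw [hc]; field_simp
    linarith [hδ', this.le, this.symm.le]
  have hgoal : α * (Sm / s1) / sN * (1 + β + β * α / s1)
      = α * Sm * c * (1 + β + β * α * e) := by
    rw [hc, he]; field_simp
  rw [hgoal]
  -- final chain
  have htri : |bb - μ| ≤ |ab - μ| + δ := by
    have h1 : bb - μ = (ab - μ) + (bb - ab) := by ring
    calc |bb - μ| = |(ab - μ) + (bb - ab)| := by rw [← h1]
      _ ≤ |ab - μ| + |bb - ab| := abs_add_le _ _
      _ ≤ |ab - μ| + δ := by rw [abs_sub_comm bb ab]; linarith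
  have hSc : α * S * c ≤ α * Sm * c + α * δ * sN * c := by
    have h := mul_le_mul_of_nonneg_right
      (mul_le_mul_of_nonneg_left hMink hα.le) hcpos.le
    calc α * S * c ≤ α * (Sm + δ * sN) * c := h
      _ = α * Sm * c + α * δ * sN * c := by ring
  have hsc : α * δ * sN * c = α * δ * e := by
    rw [hc, he]; field_simp
  have hprod : α * δ * e ≤ α * (β * α * Sm * c) * e :=
    mul_le_mul_of_nonneg_right (mul_le_mul_of_nonneg_left hδc hα.le) hepos.le
  calc |bb - μ| ≤ |ab - μ| + δ := htri
    _ ≤ α * S * c + δ := by linarith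
    _ ≤ α * Sm * c + α * δ * sN * c + δ := by linarith
    _ = α * Sm * c + α * δ * e + δ := by rw [hsc]
    _ ≤ α * Sm * c + α * (β * α * Sm * c) * e + β * α * Sm * c := by linarith
    _ = α * Sm * c * (1 + β + β * α * e) := by ring
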